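/- Let V be a vector space over a field k, let φ be a finite potent endomorphism of V with AST-decomposition V = W_φ ⊕ U_φ, and let L ⊆ V be a φ-invariant subspace. If φ restricted to L is nilpotent, then L ⊆ U_φ. -/

import Mathlib

/-- Lemma: if `φ` is finite potent with AST-decomposition `V = W ⊕ U` and `L` is a
`φ`-invariant subspace on which `φ` restricts to a nilpotent endomorphism, then `L ⊆ U`. -/
theorem ast_invariant_nilpotent_sub {k V : Type*} [Field k] [AddCommGroup V] [Module k V]
    (φ : V →ₗ[k] V)
    (hfp : ∃ n : ℕ, FiniteDimensional k (LinearMap.range (φ ^ n)))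
    (W U : Submodule k V) (hWU : IsCompl W U) [FiniteDimensional k W]
    (hW : ∀ x ∈ W, φ x ∈ W) (hU : ∀ x ∈ U, φ x ∈ U)
    (hWa : Function.Bijective (φ.restrict hW))
    (hUn : IsNilpotent (φ.restrict hU))
    (L : Submodule k V) (hL : ∀ x ∈ L, φ x ∈ L)
    (hLn : IsNilpotent (φ.restrict hL)) :
    L ≤ U := by
  obtain ⟨m, hm⟩ := hLn
  intro x hx
  -- φ^m kills L
  have hxkill : (φ ^ m) x = 0 := by
    have := congrArg (Subtype.val) (LinearMap.ext_iff.mp hm ⟨x, hx⟩)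
    rwa [Module.End.pow_restrict, LinearMap.restrict_apply] at this
  -- decompose x = w + u
  obtain ⟨w, hw, u, hu, rfl⟩ : ∃ w ∈ W, ∃ u ∈ U, w + u = x := by
    have := Submodule.mem_sup.mp (by rw [hWU.sup_eq_top]; trivial :
      x ∈ W ⊔ U)
    simpa using this
  have hwW : (φ ^ m) w ∈ W := Module.End.pow_apply_mem_of_forall_mem m hW w hw
  have huU : (φ ^ m) u ∈ U := Module.End.pow_apply_mem_of_forall_mem m hU u hu
  have hsum : (φ ^ m) w + (φ ^ m) u = 0 := by
    rw [← map_add]; exact hxkill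
  have hwz : (φ ^ m) w = 0 := by
    have : (φ ^ m) w ∈ W ⊓ U := ⟨hwW, by
      rw [eq_neg_of_add_eq_zero_left hsum]; exact neg_mem huU⟩
    rw [hWU.inf_eq_bot] at this
    exact this
  -- φ bijective on W ⇒ φ^m injective on W ⇒ w = 0
  have hinj : Function.Injective ((φ.restrict hW) ^ m) := by
    have hbij : ∀ n : ℕ, Function.Bijective ((φ.restrict hW) ^ n) := by
      intro n
      induction n with
      | zero => simpa [Module.End.coe_one] using Function.bijective_id
      | succ n ih => rw [pow_succ, Module.End.mul_eq_comp, LinearMap.coe_comp]; exact ih.comp hWa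
    exact (hbij m).injective
  have hw0 : w = 0 := by
    have : ((φ.restrict hW) ^ m) ⟨w, hw⟩ = 0 := by
      apply Subtype.ext
      rw [Module.End.pow_restrict, LinearMap.restrict_apply]
      exact hwz
    have := hinj (a₂ := 0) (by simpa using this)
    exact congrArg Subtype.val this
  rw [hw0, zero_add]
  exact hu
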